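/- Let μ = 2 and define I = (I¹,I²,I³,I⁴) : ℝ⁷ → ℝ⁴ by I¹(a2,a3,a4,b1,b2,b3,b4) = 12μ·(a2² − a3² − a4²) + b1 + b3, I² = 4·a4² + b2² − b3² − b4² − b1² − 2·b3·b1, I³ = a2·b2 − a3·b3 − a4·b4 − a3·b1, I⁴ = (9μ/2)·b1·(a2² − a3² − a4²) + a4². Then the (Fréchet) derivative of I at the point x₀ = (1/36)·(√3, √3, √6, 4, 0, 0, −2·√2) is a surjective linear map ℝ⁷ → ℝ⁴; consequently the zero set I⁻¹(0) is a 3-dimensional smooth submanifold of ℝ⁷ in a neighborhood of x₀. -/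

import Mathlib

noncomputable section
open ContinuousLinearMap

abbrev E7 : Type := ℝ × ℝ × ℝ × ℝ × ℝ × ℝ × ℝ

def π1 : E7 →L[ℝ] ℝ := fst ℝ ℝ _
def π2 : E7 →L[ℝ] ℝ := (fst ℝ ℝ _).comp (snd ℝ ℝ _)
def π3 : E7 →L[ℝ] ℝ := ((fst ℝ ℝ _).comp (snd ℝ ℝ _)).comp (snd ℝ ℝ _)
def π4 : E7 →L[ℝ] ℝ := (((fst ℝ ℝ _).comp (snd ℝ ℝ _)).comp (snd ℝ ℝ _)).comp (snd ℝ ℝ _)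
def π5 : E7 →L[ℝ] ℝ :=
  ((((fst ℝ ℝ _).comp (snd ℝ ℝ _)).comp (snd ℝ ℝ _)).comp (snd ℝ ℝ _)).comp (snd ℝ ℝ _)
def π6 : E7 →L[ℝ] ℝ :=
  (((((fst ℝ ℝ _).comp (snd ℝ ℝ _)).comp (snd ℝ ℝ _)).comp (snd ℝ ℝ _)).comp (snd ℝ ℝ _)).comp (snd ℝ ℝ _)
def π7 : E7 →L[ℝ] ℝ :=
  (((((snd ℝ ℝ ℝ).comp (snd ℝ ℝ _)).comp (snd ℝ ℝ _)).comp (snd ℝ ℝ _)).comp (snd ℝ ℝ _)).comp (snd ℝ ℝ _)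

lemma hπ1 (x : E7) : HasFDerivAt (fun x : E7 => x.1) π1 x := hasFDerivAt_fst
lemma hπ2 (x : E7) : HasFDerivAt (fun x : E7 => x.2.1) π2 x :=
  hasFDerivAt_fst.comp x hasFDerivAt_snd
lemma hπ3 (x : E7) : HasFDerivAt (fun x : E7 => x.2.2.1) π3 x :=
  (hasFDerivAt_fst.comp _ hasFDerivAt_snd).comp x hasFDerivAt_snd
lemma hπ4 (x : E7) : HasFDerivAt (fun x : E7 => x.2.2.2.1) π4 x :=
  ((hasFDerivAt_fst.comp _ hasFDerivAt_snd).comp _ hasFDerivAt_snd).comp x hasFDerivAt_snd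
lemma hπ5 (x : E7) : HasFDerivAt (fun x : E7 => x.2.2.2.2.1) π5 x :=
  (((hasFDerivAt_fst.comp _ hasFDerivAt_snd).comp _ hasFDerivAt_snd).comp _
    hasFDerivAt_snd).comp x hasFDerivAt_snd
lemma hπ6 (x : E7) : HasFDerivAt (fun x : E7 => x.2.2.2.2.2.1) π6 x :=
  ((((hasFDerivAt_fst.comp _ hasFDerivAt_snd).comp _ hasFDerivAt_snd).comp _
    hasFDerivAt_snd).comp _ hasFDerivAt_snd).comp x hasFDerivAt_snd
lemma hπ7 (x : E7) : HasFDerivAt (fun x : E7 => x.2.2.2.2.2.2) π7 x :=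
  ((((hasFDerivAt_snd.comp _ hasFDerivAt_snd).comp _ hasFDerivAt_snd).comp _
    hasFDerivAt_snd).comp _ hasFDerivAt_snd).comp x hasFDerivAt_snd

end





/-- Podestà–Spiro: the derivative of the first-integral map `I` (with `μ = 2`) at the
initial data `x₀` of the homogeneous nearly Kähler structure on `S³×S³` is a surjective
linear map `ℝ⁷ → ℝ⁴`; consequently the zero set `I⁻¹(0)` is, near `x₀`, a smooth
submanifold of dimension `3` (the kernel of the derivative, i.e. the tangent space,
is 3-dimensional). -/
theorem stmt_11
    (μ : ℝ) (hμ : μ = 2)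
    (I : ℝ × ℝ × ℝ × ℝ × ℝ × ℝ × ℝ → ℝ × ℝ × ℝ × ℝ)
    (hI : ∀ a2 a3 a4 b1 b2 b3 b4 : ℝ,
      I (a2, a3, a4, b1, b2, b3, b4) =
        (12 * μ * (a2 ^ 2 - a3 ^ 2 - a4 ^ 2) + b1 + b3,
         4 * a4 ^ 2 + b2 ^ 2 - b3 ^ 2 - b4 ^ 2 - b1 ^ 2 - 2 * b3 * b1,
         a2 * b2 - a3 * b3 - a4 * b4 - a3 * b1,
         (9 * μ / 2) * b1 * (a2 ^ 2 - a3 ^ 2 - a4 ^ 2) + a4 ^ 2))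
    (x₀ : ℝ × ℝ × ℝ × ℝ × ℝ × ℝ × ℝ)
    (hx₀ : x₀ = (Real.sqrt 3 / 36, Real.sqrt 3 / 36, Real.sqrt 6 / 36,
      4 / 36, 0, 0, -(2 * Real.sqrt 2) / 36)) :
    Function.Surjective (fderiv ℝ I x₀) ∧
    Module.finrank ℝ (LinearMap.ker (fderiv ℝ I x₀).toLinearMap) = 3 := by
  subst hμ
  have hIeq : I = fun x : E7 =>
      (12 * 2 * (x.1 * x.1 - x.2.1 * x.2.1 - x.2.2.1 * x.2.2.1) + x.2.2.2.1 + x.2.2.2.2.2.1,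
       4 * (x.2.2.1 * x.2.2.1) + x.2.2.2.2.1 * x.2.2.2.2.1 - x.2.2.2.2.2.1 * x.2.2.2.2.2.1
         - x.2.2.2.2.2.2 * x.2.2.2.2.2.2
         - x.2.2.2.1 * x.2.2.2.1 - 2 * x.2.2.2.2.2.1 * x.2.2.2.1,
       x.1 * x.2.2.2.2.1 - x.2.1 * x.2.2.2.2.2.1 - x.2.2.1 * x.2.2.2.2.2.2
         - x.2.1 * x.2.2.2.1,
       (9 * 2 / 2) * x.2.2.2.1 * (x.1 * x.1 - x.2.1 * x.2.1 - x.2.2.1 * x.2.2.1)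
         + x.2.2.1 * x.2.2.1) := by
    funext x
    obtain ⟨a2, a3, a4, b1, b2, b3, b4⟩ := x
    rw [hI a2 a3 a4 b1 b2 b3 b4]
    simp only [Prod.mk.injEq]
    refine ⟨by ring, by ring, trivial, by ring⟩
  subst hIeq hx₀
  have key : ∀ D : E7 →L[ℝ] ℝ × ℝ × ℝ × ℝ, Function.Surjective D →
      Module.finrank ℝ (LinearMap.ker D.toLinearMap) = 3 := by
    intro D hD
    have h1 := LinearMap.finrank_range_add_finrank_ker (D : E7 →ₗ[ℝ] ℝ × ℝ × ℝ × ℝ)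
    have hr : LinearMap.range (D : E7 →ₗ[ℝ] ℝ × ℝ × ℝ × ℝ) = ⊤ :=
      LinearMap.range_eq_top.mpr hD
    rw [hr, finrank_top] at h1
    have h2 : Module.finrank ℝ E7 = 7 := by simp
    have h3 : Module.finrank ℝ (ℝ × ℝ × ℝ × ℝ) = 4 := by simp
    rw [h2, h3] at h1
    have hk : LinearMap.ker (D : E7 →ₗ[ℝ] ℝ × ℝ × ℝ × ℝ) = LinearMap.ker D.toLinearMap := rfl
    rw [hk] at h1
    omega
  have hsurj : Function.Surjective (fderiv ℝ (fun x : E7 =>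
      (12 * 2 * (x.1 * x.1 - x.2.1 * x.2.1 - x.2.2.1 * x.2.2.1) + x.2.2.2.1 + x.2.2.2.2.2.1,
       4 * (x.2.2.1 * x.2.2.1) + x.2.2.2.2.1 * x.2.2.2.2.1 - x.2.2.2.2.2.1 * x.2.2.2.2.2.1
         - x.2.2.2.2.2.2 * x.2.2.2.2.2.2
         - x.2.2.2.1 * x.2.2.2.1 - 2 * x.2.2.2.2.2.1 * x.2.2.2.1,
       x.1 * x.2.2.2.2.1 - x.2.1 * x.2.2.2.2.2.1 - x.2.2.1 * x.2.2.2.2.2.2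
         - x.2.1 * x.2.2.2.1,
       (9 * 2 / 2) * x.2.2.2.1 * (x.1 * x.1 - x.2.1 * x.2.1 - x.2.2.1 * x.2.2.1)
         + x.2.2.1 * x.2.2.1))
      (Real.sqrt 3 / 36, Real.sqrt 3 / 36, Real.sqrt 6 / 36,
        4 / 36, 0, 0, -(2 * Real.sqrt 2) / 36)) := by
    set x₀ : E7 := (Real.sqrt 3 / 36, Real.sqrt 3 / 36, Real.sqrt 6 / 36,
        4 / 36, 0, 0, -(2 * Real.sqrt 2) / 36) with hx₀
    have hF1 := (((((((hπ1 x₀).mul (hπ1 x₀)).sub ((hπ2 x₀).mul (hπ2 x₀))).sub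
        ((hπ3 x₀).mul (hπ3 x₀)))).const_mul (12 * 2)).add (hπ4 x₀)).add (hπ6 x₀)
    have hF2 := (((((((hπ3 x₀).mul (hπ3 x₀)).const_mul 4).add ((hπ5 x₀).mul (hπ5 x₀))).sub
        ((hπ6 x₀).mul (hπ6 x₀))).sub ((hπ7 x₀).mul (hπ7 x₀))).sub
        ((hπ4 x₀).mul (hπ4 x₀))).sub (((hπ6 x₀).const_mul 2).mul (hπ4 x₀))
    have hF3 := ((((hπ1 x₀).mul (hπ5 x₀)).sub ((hπ2 x₀).mul (hπ6 x₀))).sub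
        ((hπ3 x₀).mul (hπ7 x₀))).sub ((hπ2 x₀).mul (hπ4 x₀))
    have hF4 := (((hπ4 x₀).const_mul (9 * 2 / 2)).mul
        ((((hπ1 x₀).mul (hπ1 x₀)).sub ((hπ2 x₀).mul (hπ2 x₀))).sub
          ((hπ3 x₀).mul (hπ3 x₀)))).add ((hπ3 x₀).mul (hπ3 x₀))
    have hF := HasFDerivAt.prodMk hF1 (HasFDerivAt.prodMk hF2 (HasFDerivAt.prodMk hF3 hF4))
    erw [HasFDerivAt.fderiv hF]
    have h2 : Real.sqrt 2 * Real.sqrt 2 = 2 := Real.mul_self_sqrt (by norm_num)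
    have h3 : Real.sqrt 3 * Real.sqrt 3 = 3 := Real.mul_self_sqrt (by norm_num)
    have h6 : Real.sqrt 6 * Real.sqrt 6 = 6 := Real.mul_self_sqrt (by norm_num)
    have h62 : Real.sqrt 6 = Real.sqrt 2 * Real.sqrt 3 := by
      rw [← Real.sqrt_mul (by norm_num)]; norm_num
    rintro ⟨c1, c2, c3, c4⟩
    refine ⟨(0, 0, 0, -24 * c4, 3 * c1 + 9 * c2 + 12 * Real.sqrt 3 * c3,
      c1 + 24 * c4, (2 * c1 + 9 * c2) * Real.sqrt 2 / 2), ?_⟩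
    simp only [ContinuousLinearMap.prod_apply, ContinuousLinearMap.add_apply,
      ContinuousLinearMap.coe_smul', ContinuousLinearMap.smul_apply, Pi.smul_apply,
      ContinuousLinearMap.coe_sub', Pi.sub_apply, ContinuousLinearMap.coe_comp',
      Function.comp_apply, ContinuousLinearMap.coe_fst', ContinuousLinearMap.coe_snd',
      π1, π2, π3, π4, π5, π6, π7, smul_eq_mul, Prod.mk.injEq, hx₀]
    norm_num
    refine ⟨?_, ?_, ?_⟩
    · linear_combination ((2 * c1 + 9 * c2) / 18) * h2
    · rw [h62]
      linear_combination (-(Real.sqrt 3 * (2 * c1 + 9 * c2)) / 72) * h2 + (c3 / 3) * h3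
    · linear_combination (c4 / 6) * h6
  exact ⟨hsurj, key _ hsurj⟩
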